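/- For every positive integer k, ∑_{i=0}^{k-1} (1+i) ζ(2, 2+i, k-i) + 2 ∑_{i=0}^{k-1} ζ(3, 1+i, k-i) + ζ(2, k, 2) + k·ζ(2, k+1, 1) + 2ζ(3, k, 1) = ζ(2, 2, k) - 2ζ(3, 1, k) + ζ(2, k, 2) + ζ(4, k) + ζ(2, 2+k). -/

import Mathlib

/-- The double zeta value `ζ(p, q) = ∑_{m > n > 0} m^{-p} n^{-q}`. -/
noncomputable def zeta2 (p q : ℕ) : ℝ :=
  ∑' (a : ℕ) (b : ℕ), 1 / (((a : ℝ) + (b : ℝ) + 2) ^ p * ((b : ℝ) + 1) ^ q)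

/-- The triple zeta value `ζ(k₁, k₂, k₃) = ∑_{m₁ > m₂ > m₃ > 0} ∏ m_j^{-k_j}`. -/
noncomputable def zeta3 (k₁ k₂ k₃ : ℕ) : ℝ :=
  ∑' (a : ℕ) (b : ℕ) (c : ℕ),
    1 / (((a : ℝ) + (b : ℝ) + (c : ℝ) + 3) ^ k₁ *
         ((b : ℝ) + (c : ℝ) + 2) ^ k₂ * ((c : ℝ) + 1) ^ k₃)

open Real

-- families
noncomputable def z3f (p q r : ℕ) (x : ℕ × ℕ × ℕ) : ℝ :=
  1 / (((x.1 : ℝ) + (x.2.1 : ℝ) + (x.2.2 : ℝ) + 3) ^ p *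
       ((x.2.1 : ℝ) + (x.2.2 : ℝ) + 2) ^ q * ((x.2.2 : ℝ) + 1) ^ r)

noncomputable def z2f (p q : ℕ) (x : ℕ × ℕ) : ℝ :=
  1 / (((x.1 : ℝ) + (x.2 : ℝ) + 2) ^ p * ((x.2 : ℝ) + 1) ^ q)

noncomputable def uf (k : ℕ) (x : ℕ × ℕ × ℕ) : ℝ :=
  1 / (((x.1 : ℝ) + (x.2.1 : ℝ) + (x.2.2 : ℝ) + 3) ^ 2 * ((x.1 : ℝ) + 1) ^ 2 *
       ((x.2.2 : ℝ) + 1) ^ k)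

noncomputable def vf (k : ℕ) (x : ℕ × ℕ × ℕ) : ℝ :=
  1 / (((x.1 : ℝ) + (x.2.1 : ℝ) + (x.2.2 : ℝ) + 3) ^ 3 * ((x.1 : ℝ) + 1) *
       ((x.2.2 : ℝ) + 1) ^ k)

noncomputable def tf (k : ℕ) (x : ℕ × ℕ × ℕ) : ℝ :=
  1 / (((x.1 : ℝ) + 1) ^ 2 * ((x.2.1 : ℝ) + (x.2.2 : ℝ) + 2) ^ 2 * ((x.2.2 : ℝ) + 1) ^ k)

lemma z3f_pos (p q r : ℕ) (x : ℕ × ℕ × ℕ) : 0 < z3f p q r x := by unfold z3f; positivity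
lemma z2f_pos (p q : ℕ) (x : ℕ × ℕ) : 0 < z2f p q x := by unfold z2f; positivity
lemma uf_pos (k : ℕ) (x : ℕ × ℕ × ℕ) : 0 < uf k x := by unfold uf; positivity
lemma vf_pos (k : ℕ) (x : ℕ × ℕ × ℕ) : 0 < vf k x := by unfold vf; positivity
lemma tf_pos (k : ℕ) (x : ℕ × ℕ × ℕ) : 0 < tf k x := by unfold tf; positivity

noncomputable def dompr (n : ℕ) : ℝ := 1 / (((n:ℝ)+1) * Real.sqrt ((n:ℝ)+1))
lemma dompr_pos (n : ℕ) : 0 < dompr n := by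
  unfold dompr; positivity
lemma summable_dompr : Summable dompr := by
  have h0 : Summable (fun n : ℕ => 1/(n:ℝ)^((3:ℝ)/2)) :=
    Real.summable_one_div_nat_rpow.mpr (by norm_num)
  have h1 := (summable_nat_add_iff 1).mpr h0
  refine h1.congr fun n => ?_
  unfold dompr
  have hx : (0:ℝ) ≤ (n:ℝ)+1 := by positivity
  rw [show ((n+1:ℕ):ℝ) = (n:ℝ)+1 by push_cast; ring]
  rw [show ((3:ℝ)/2) = 1 + 1/2 by norm_num, Real.rpow_add (by linarith), Real.rpow_one,
    ← Real.sqrt_eq_rpow]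
lemma summable_dompr3 : Summable (fun x : ℕ × ℕ × ℕ => dompr x.1 * (dompr x.2.1 * dompr x.2.2)) := by
  have h2 : Summable (fun y : ℕ × ℕ => dompr y.1 * dompr y.2) :=
    summable_dompr.mul_of_nonneg summable_dompr (fun n => (dompr_pos n).le) (fun n => (dompr_pos n).le)
  exact summable_dompr.mul_of_nonneg h2 (fun n => (dompr_pos n).le)
    (fun y => by have := dompr_pos y.1; have := dompr_pos y.2; positivity)
lemma summable_dompr2 : Summable (fun x : ℕ × ℕ => dompr x.1 * dompr x.2) :=
  summable_dompr.mul_of_nonneg summable_dompr (fun n => (dompr_pos n).le) (fun n => (dompr_pos n).le)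



lemma sqrt_le_self' {x : ℝ} (hx : 1 ≤ x) : √x ≤ x := by
  have h0 : (0:ℝ) ≤ x := by linarith
  have := Real.sqrt_le_sqrt (by nlinarith : x ≤ x*x)
  rwa [Real.sqrt_mul_self h0] at this

lemma pow_mono3 {M n C : ℝ} (hM : 1 ≤ M) (hn : 1 ≤ n) (hC : 1 ≤ C) {p q r p' q' r' : ℕ}
    (h1 : p' ≤ p) (h2 : q' ≤ q) (h3 : r' ≤ r) : M^p'*n^q'*C^r' ≤ M^p*n^q*C^r := by
  have := pow_le_pow_right₀ hM h1
  have := pow_le_pow_right₀ hn h2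
  have := pow_le_pow_right₀ hC h3
  have : (0:ℝ) < M := by linarith
  have : (0:ℝ) < n := by linarith
  have : (0:ℝ) < C := by linarith
  gcongr

section Ineq
variable {A B C : ℝ} (hA : 1 ≤ A) (hB : 1 ≤ B) (hC : 1 ≤ C)

-- master: A√A * (B√B * C√C) ≤ M^2 * n^2 * C  (shape p≥2,q≥2,r≥1)
include hA hB hC in
lemma key1 : A*√A*(B*√B*(C*√C)) ≤ (A+B+C)^2*(B+C)^2*C := by
  have hA0 : (0:ℝ) ≤ A := by linarith
  have hB0 : (0:ℝ) ≤ B := by linarith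
  have hC0 : (0:ℝ) ≤ C := by linarith
  have hn : (1:ℝ) ≤ B+C := by linarith
  have hM : (1:ℝ) ≤ A+B+C := by linarith
  have hMn : B+C ≤ A+B+C := by linarith
  have e1 : A*√A ≤ (A+B+C)*√(A+B+C) := by
    apply mul_le_mul (by linarith) (Real.sqrt_le_sqrt (by linarith)) (Real.sqrt_nonneg _) (by linarith)
  have e2 : B*√B ≤ (B+C)*√(A+B+C) := by
    apply mul_le_mul (by linarith) (Real.sqrt_le_sqrt (by linarith)) (Real.sqrt_nonneg _) (by linarith)
  have e3 : C*√C ≤ C*√(B+C) := by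
    apply mul_le_mul (le_refl C) (Real.sqrt_le_sqrt (by linarith)) (Real.sqrt_nonneg _) hC0
  calc A*√A*(B*√B*(C*√C)) ≤ ((A+B+C)*√(A+B+C))*(((B+C)*√(A+B+C))*(C*√(B+C))) := by
        apply mul_le_mul e1 (mul_le_mul e2 e3 (by positivity) (by positivity)) (by positivity) (by positivity)
    _ = (√(A+B+C)*√(A+B+C))*((A+B+C)*(B+C)*C*√(B+C)) := by ring
    _ = (A+B+C)*((A+B+C)*(B+C)*C*√(B+C)) := by rw [Real.mul_self_sqrt (by linarith)]
    _ ≤ (A+B+C)*((A+B+C)*(B+C)*C*(B+C)) := by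
        have h : √(B+C) ≤ B+C := sqrt_le_self' hn
        gcongr
    _ = (A+B+C)^2*(B+C)^2*C := by ring

-- shape p≥2,q≥1,r≥2 :  ≤ M^2 * n * C^2
include hA hB hC in
lemma key2 : A*√A*(B*√B*(C*√C)) ≤ (A+B+C)^2*(B+C)*C^2 := by
  have hn : (1:ℝ) ≤ B+C := by linarith
  have hM : (1:ℝ) ≤ A+B+C := by linarith
  have e1 : A*√A ≤ (A+B+C)*√(A+B+C) := by
    apply mul_le_mul (by linarith) (Real.sqrt_le_sqrt (by linarith)) (Real.sqrt_nonneg _) (by linarith)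
  have e2 : B*√B ≤ (B+C)*√(A+B+C) := by
    apply mul_le_mul (by linarith) (Real.sqrt_le_sqrt (by linarith)) (Real.sqrt_nonneg _) (by linarith)
  have e3 : C*√C ≤ C*C := by
    apply mul_le_mul (le_refl C) (sqrt_le_self' hC) (Real.sqrt_nonneg _) (by linarith)
  calc A*√A*(B*√B*(C*√C)) ≤ ((A+B+C)*√(A+B+C))*(((B+C)*√(A+B+C))*(C*C)) := by
        apply mul_le_mul e1 (mul_le_mul e2 e3 (by positivity) (by positivity)) (by positivity) (by positivity)
    _ = (√(A+B+C)*√(A+B+C))*((A+B+C)*(B+C)*(C*C)) := by ring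
    _ = (A+B+C)*((A+B+C)*(B+C)*(C*C)) := by rw [Real.mul_self_sqrt (by linarith)]
    _ = (A+B+C)^2*(B+C)*C^2 := by ring

-- shape p≥3,q≥1,r≥1 : ≤ M^3 * n * C
include hA hB hC in
lemma key3 : A*√A*(B*√B*(C*√C)) ≤ (A+B+C)^3*(B+C)*C := by
  have hn : (1:ℝ) ≤ B+C := by linarith
  have hM : (1:ℝ) ≤ A+B+C := by linarith
  have e1 : A*√A ≤ (A+B+C)*√(A+B+C) := by
    apply mul_le_mul (by linarith) (Real.sqrt_le_sqrt (by linarith)) (Real.sqrt_nonneg _) (by linarith)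
  have e2 : B*√B ≤ (B+C)*√(A+B+C) := by
    apply mul_le_mul (by linarith) (Real.sqrt_le_sqrt (by linarith)) (Real.sqrt_nonneg _) (by linarith)
  have e3 : C*√C ≤ C*√(A+B+C) := by
    apply mul_le_mul (le_refl C) (Real.sqrt_le_sqrt (by linarith)) (Real.sqrt_nonneg _) (by linarith)
  calc A*√A*(B*√B*(C*√C)) ≤ ((A+B+C)*√(A+B+C))*(((B+C)*√(A+B+C))*(C*√(A+B+C))) := by
        apply mul_le_mul e1 (mul_le_mul e2 e3 (by positivity) (by positivity)) (by positivity) (by positivity)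
    _ = (√(A+B+C)*√(A+B+C))*√(A+B+C)*((A+B+C)*(B+C)*C) := by ring
    _ = (A+B+C)*√(A+B+C)*((A+B+C)*(B+C)*C) := by rw [Real.mul_self_sqrt (by linarith)]
    _ ≤ (A+B+C)*(A+B+C)*((A+B+C)*(B+C)*C) := by
        have h : √(A+B+C) ≤ A+B+C := sqrt_le_self' hM
        gcongr
    _ = (A+B+C)^3*(B+C)*C := by ring

-- shape U' : ≤ M^2 * A^2 * C   (b missing)
include hA hB hC in
lemma key4 : A*√A*(B*√B*(C*√C)) ≤ (A+B+C)^2*A^2*C := by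
  have hM : (1:ℝ) ≤ A+B+C := by linarith
  have e1 : A*√A ≤ A*A := mul_le_mul (le_refl A) (sqrt_le_self' hA) (Real.sqrt_nonneg _) (by linarith)
  have e2 : B*√B ≤ (A+B+C)*√(A+B+C) := by
    apply mul_le_mul (by linarith) (Real.sqrt_le_sqrt (by linarith)) (Real.sqrt_nonneg _) (by linarith)
  have e3 : C*√C ≤ C*√(A+B+C) := by
    apply mul_le_mul (le_refl C) (Real.sqrt_le_sqrt (by linarith)) (Real.sqrt_nonneg _) (by linarith)
  calc A*√A*(B*√B*(C*√C)) ≤ (A*A)*(((A+B+C)*√(A+B+C))*(C*√(A+B+C))) := by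
        apply mul_le_mul e1 (mul_le_mul e2 e3 (by positivity) (by positivity)) (by positivity) (by positivity)
    _ = (√(A+B+C)*√(A+B+C))*(A*A*(A+B+C)*C) := by ring
    _ = (A+B+C)*(A*A*(A+B+C)*C) := by rw [Real.mul_self_sqrt (by linarith)]
    _ = (A+B+C)^2*A^2*C := by ring

-- shape V' : ≤ M^3 * A * C
include hA hB hC in
lemma key5 : A*√A*(B*√B*(C*√C)) ≤ (A+B+C)^3*A*C := by
  have hM : (1:ℝ) ≤ A+B+C := by linarith
  have e1 : A*√A ≤ A*√(A+B+C) := by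
    apply mul_le_mul (le_refl A) (Real.sqrt_le_sqrt (by linarith)) (Real.sqrt_nonneg _) (by linarith)
  have e2 : B*√B ≤ (A+B+C)*√(A+B+C) := by
    apply mul_le_mul (by linarith) (Real.sqrt_le_sqrt (by linarith)) (Real.sqrt_nonneg _) (by linarith)
  have e3 : C*√C ≤ C*√(A+B+C) := by
    apply mul_le_mul (le_refl C) (Real.sqrt_le_sqrt (by linarith)) (Real.sqrt_nonneg _) (by linarith)
  calc A*√A*(B*√B*(C*√C)) ≤ (A*√(A+B+C))*(((A+B+C)*√(A+B+C))*(C*√(A+B+C))) := by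
        apply mul_le_mul e1 (mul_le_mul e2 e3 (by positivity) (by positivity)) (by positivity) (by positivity)
    _ = (√(A+B+C)*√(A+B+C))*√(A+B+C)*(A*(A+B+C)*C) := by ring
    _ = (A+B+C)*√(A+B+C)*(A*(A+B+C)*C) := by rw [Real.mul_self_sqrt (by linarith)]
    _ ≤ (A+B+C)*(A+B+C)*(A*(A+B+C)*C) := by
        have h : √(A+B+C) ≤ A+B+C := sqrt_le_self' hM
        gcongr
    _ = (A+B+C)^3*A*C := by ring

-- shape T : ≤ A^2 * n^2 * C
include hA hB hC in
lemma key6 : A*√A*(B*√B*(C*√C)) ≤ A^2*(B+C)^2*C := by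
  have hn : (1:ℝ) ≤ B+C := by linarith
  have e1 : A*√A ≤ A*A := mul_le_mul (le_refl A) (sqrt_le_self' hA) (Real.sqrt_nonneg _) (by linarith)
  have e2 : B*√B ≤ (B+C)*√(B+C) := by
    apply mul_le_mul (by linarith) (Real.sqrt_le_sqrt (by linarith)) (Real.sqrt_nonneg _) (by linarith)
  have e3 : C*√C ≤ C*√(B+C) := by
    apply mul_le_mul (le_refl C) (Real.sqrt_le_sqrt (by linarith)) (Real.sqrt_nonneg _) (by linarith)
  calc A*√A*(B*√B*(C*√C)) ≤ (A*A)*(((B+C)*√(B+C))*(C*√(B+C))) := by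
        apply mul_le_mul e1 (mul_le_mul e2 e3 (by positivity) (by positivity)) (by positivity) (by positivity)
    _ = (√(B+C)*√(B+C))*(A*A*(B+C)*C) := by ring
    _ = (B+C)*(A*A*(B+C)*C) := by rw [Real.mul_self_sqrt (by linarith)]
    _ = A^2*(B+C)^2*C := by ring

end Ineq

-- zeta2 shape : A√A * B√B ≤ (A+B)^2 * B
lemma key7 {A B : ℝ} (hA : 1 ≤ A) (hB : 1 ≤ B) : A*√A*(B*√B) ≤ (A+B)^2*B := by
  have hM : (1:ℝ) ≤ A+B := by linarith
  have e1 : A*√A ≤ (A+B)*√(A+B) := by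
    apply mul_le_mul (by linarith) (Real.sqrt_le_sqrt (by linarith)) (Real.sqrt_nonneg _) (by linarith)
  have e2 : B*√B ≤ B*√(A+B) := by
    apply mul_le_mul (le_refl B) (Real.sqrt_le_sqrt (by linarith)) (Real.sqrt_nonneg _) (by linarith)
  calc A*√A*(B*√B) ≤ ((A+B)*√(A+B))*(B*√(A+B)) := by
        apply mul_le_mul e1 e2 (by positivity) (by positivity)
    _ = (√(A+B)*√(A+B))*((A+B)*B) := by ring
    _ = (A+B)*((A+B)*B) := by rw [Real.mul_self_sqrt (by linarith)]
    _ = (A+B)^2*B := by ring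

section Summability

lemma one_le_n1 (n : ℕ) : (1:ℝ) ≤ (n:ℝ)+1 := by
  have : (0:ℝ) ≤ (n:ℝ) := Nat.cast_nonneg n
  linarith

lemma dompr_prod3 (a b c : ℕ) :
    dompr a * (dompr b * dompr c) =
      1 / (((a:ℝ)+1)*√((a:ℝ)+1)*((((b:ℝ)+1)*√((b:ℝ)+1))*(((c:ℝ)+1)*√((c:ℝ)+1)))) := by
  unfold dompr
  rw [one_div_mul_one_div, one_div_mul_one_div]

lemma dompr_prod2 (a b : ℕ) :
    dompr a * dompr b =
      1 / (((a:ℝ)+1)*√((a:ℝ)+1)*((((b:ℝ)+1)*√((b:ℝ)+1)))) := by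
  unfold dompr
  rw [one_div_mul_one_div]

lemma summable_z3f (p q r : ℕ) (hp : 2 ≤ p) (hq : 1 ≤ q) (hr : 1 ≤ r)
    (hx : 3 ≤ p ∨ 2 ≤ q ∨ 2 ≤ r) : Summable (z3f p q r) := by
  apply summable_dompr3.of_nonneg_of_le (fun x => (z3f_pos p q r x).le)
  rintro ⟨a, b, c⟩
  have hA : (1:ℝ) ≤ (a:ℝ)+1 := one_le_n1 a
  have hB : (1:ℝ) ≤ (b:ℝ)+1 := one_le_n1 b
  have hC : (1:ℝ) ≤ (c:ℝ)+1 := one_le_n1 c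
  have hM1 : (1:ℝ) ≤ ((a:ℝ)+1)+((b:ℝ)+1)+((c:ℝ)+1) := by linarith
  have hn1 : (1:ℝ) ≤ ((b:ℝ)+1)+((c:ℝ)+1) := by linarith
  have hkey : ((a:ℝ)+1)*√((a:ℝ)+1)*((((b:ℝ)+1)*√((b:ℝ)+1))*(((c:ℝ)+1)*√((c:ℝ)+1)))
      ≤ ((((a:ℝ)+1)+((b:ℝ)+1)+((c:ℝ)+1))^p * ((((b:ℝ)+1)+((c:ℝ)+1)))^q * (((c:ℝ)+1))^r) := by
    rcases hx with h3 | h2 | h2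
    · refine le_trans (key3 hA hB hC) ?_
      simpa using pow_mono3 hM1 hn1 hC (p' := 3) (q' := 1) (r' := 1) h3 hq hr
    · refine le_trans (key1 hA hB hC) ?_
      simpa using pow_mono3 hM1 hn1 hC (p' := 2) (q' := 2) (r' := 1) hp h2 hr
    · refine le_trans (key2 hA hB hC) ?_
      simpa using pow_mono3 hM1 hn1 hC (p' := 2) (q' := 1) (r' := 2) hp hq h2
  have hzf : z3f p q r (a, b, c)
      = 1 / (((((a:ℝ)+1)+((b:ℝ)+1)+((c:ℝ)+1))^p * ((((b:ℝ)+1)+((c:ℝ)+1)))^q * (((c:ℝ)+1))^r)) := by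
    unfold z3f
    congr 2 <;> ring
  rw [hzf, dompr_prod3]
  exact one_div_le_one_div_of_le (by positivity) hkey

lemma summable_uf (k : ℕ) (hk : 1 ≤ k) : Summable (uf k) := by
  apply summable_dompr3.of_nonneg_of_le (fun x => (uf_pos k x).le)
  rintro ⟨a, b, c⟩
  have hA : (1:ℝ) ≤ (a:ℝ)+1 := one_le_n1 a
  have hB : (1:ℝ) ≤ (b:ℝ)+1 := one_le_n1 b
  have hC : (1:ℝ) ≤ (c:ℝ)+1 := one_le_n1 c
  have hkey : ((a:ℝ)+1)*√((a:ℝ)+1)*((((b:ℝ)+1)*√((b:ℝ)+1))*(((c:ℝ)+1)*√((c:ℝ)+1)))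
      ≤ ((((a:ℝ)+1)+((b:ℝ)+1)+((c:ℝ)+1))^2 * (((a:ℝ)+1))^2 * (((c:ℝ)+1))^k) := by
    refine le_trans (key4 hA hB hC) ?_
    have h2 : ((c:ℝ)+1)^1 ≤ ((c:ℝ)+1)^k := pow_le_pow_right₀ hC hk
    calc ((((a:ℝ)+1)+((b:ℝ)+1)+((c:ℝ)+1))^2 * (((a:ℝ)+1))^2 * ((c:ℝ)+1))
        = ((((a:ℝ)+1)+((b:ℝ)+1)+((c:ℝ)+1))^2 * (((a:ℝ)+1))^2) * ((c:ℝ)+1)^1 := by ring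
      _ ≤ ((((a:ℝ)+1)+((b:ℝ)+1)+((c:ℝ)+1))^2 * (((a:ℝ)+1))^2) * ((c:ℝ)+1)^k := by
          apply mul_le_mul_of_nonneg_left h2 (by positivity)
      _ = _ := by ring
  have hzf : uf k (a, b, c)
      = 1 / (((((a:ℝ)+1)+((b:ℝ)+1)+((c:ℝ)+1))^2 * (((a:ℝ)+1))^2 * (((c:ℝ)+1))^k)) := by
    unfold uf
    congr 2 <;> ring
  rw [hzf, dompr_prod3]
  exact one_div_le_one_div_of_le (by positivity) hkey

lemma summable_vf (k : ℕ) (hk : 1 ≤ k) : Summable (vf k) := by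
  apply summable_dompr3.of_nonneg_of_le (fun x => (vf_pos k x).le)
  rintro ⟨a, b, c⟩
  have hA : (1:ℝ) ≤ (a:ℝ)+1 := one_le_n1 a
  have hB : (1:ℝ) ≤ (b:ℝ)+1 := one_le_n1 b
  have hC : (1:ℝ) ≤ (c:ℝ)+1 := one_le_n1 c
  have hkey : ((a:ℝ)+1)*√((a:ℝ)+1)*((((b:ℝ)+1)*√((b:ℝ)+1))*(((c:ℝ)+1)*√((c:ℝ)+1)))
      ≤ ((((a:ℝ)+1)+((b:ℝ)+1)+((c:ℝ)+1))^3 * (((a:ℝ)+1)) * (((c:ℝ)+1))^k) := by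
    refine le_trans (key5 hA hB hC) ?_
    have h2 : ((c:ℝ)+1)^1 ≤ ((c:ℝ)+1)^k := pow_le_pow_right₀ hC hk
    calc ((((a:ℝ)+1)+((b:ℝ)+1)+((c:ℝ)+1))^3 * (((a:ℝ)+1)) * ((c:ℝ)+1))
        = ((((a:ℝ)+1)+((b:ℝ)+1)+((c:ℝ)+1))^3 * (((a:ℝ)+1))) * ((c:ℝ)+1)^1 := by ring
      _ ≤ ((((a:ℝ)+1)+((b:ℝ)+1)+((c:ℝ)+1))^3 * (((a:ℝ)+1))) * ((c:ℝ)+1)^k := by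
          apply mul_le_mul_of_nonneg_left h2 (by positivity)
      _ = _ := by ring
  have hzf : vf k (a, b, c)
      = 1 / (((((a:ℝ)+1)+((b:ℝ)+1)+((c:ℝ)+1))^3 * (((a:ℝ)+1)) * (((c:ℝ)+1))^k)) := by
    unfold vf
    congr 2 <;> ring
  rw [hzf, dompr_prod3]
  exact one_div_le_one_div_of_le (by positivity) hkey

lemma summable_tf (k : ℕ) (hk : 1 ≤ k) : Summable (tf k) := by
  apply summable_dompr3.of_nonneg_of_le (fun x => (tf_pos k x).le)
  rintro ⟨a, b, c⟩
  have hA : (1:ℝ) ≤ (a:ℝ)+1 := one_le_n1 a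
  have hB : (1:ℝ) ≤ (b:ℝ)+1 := one_le_n1 b
  have hC : (1:ℝ) ≤ (c:ℝ)+1 := one_le_n1 c
  have hkey : ((a:ℝ)+1)*√((a:ℝ)+1)*((((b:ℝ)+1)*√((b:ℝ)+1))*(((c:ℝ)+1)*√((c:ℝ)+1)))
      ≤ ((((a:ℝ)+1))^2 * ((((b:ℝ)+1)+((c:ℝ)+1)))^2 * (((c:ℝ)+1))^k) := by
    refine le_trans (key6 hA hB hC) ?_
    have h2 : ((c:ℝ)+1)^1 ≤ ((c:ℝ)+1)^k := pow_le_pow_right₀ hC hk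
    calc ((((a:ℝ)+1))^2 * ((((b:ℝ)+1)+((c:ℝ)+1)))^2 * ((c:ℝ)+1))
        = ((((a:ℝ)+1))^2 * ((((b:ℝ)+1)+((c:ℝ)+1)))^2) * ((c:ℝ)+1)^1 := by ring
      _ ≤ ((((a:ℝ)+1))^2 * ((((b:ℝ)+1)+((c:ℝ)+1)))^2) * ((c:ℝ)+1)^k := by
          apply mul_le_mul_of_nonneg_left h2 (by positivity)
      _ = _ := by ring
  have hzf : tf k (a, b, c)
      = 1 / (((((a:ℝ)+1))^2 * ((((b:ℝ)+1)+((c:ℝ)+1)))^2 * (((c:ℝ)+1))^k)) := by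
    unfold tf
    congr 2 <;> ring
  rw [hzf, dompr_prod3]
  exact one_div_le_one_div_of_le (by positivity) hkey

lemma summable_z2f (p q : ℕ) (hp : 2 ≤ p) (hq : 1 ≤ q) : Summable (z2f p q) := by
  apply summable_dompr2.of_nonneg_of_le (fun x => (z2f_pos p q x).le)
  rintro ⟨a, b⟩
  have hA : (1:ℝ) ≤ (a:ℝ)+1 := one_le_n1 a
  have hB : (1:ℝ) ≤ (b:ℝ)+1 := one_le_n1 b
  have hkey : ((a:ℝ)+1)*√((a:ℝ)+1)*((((b:ℝ)+1)*√((b:ℝ)+1)))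
      ≤ ((((a:ℝ)+1)+((b:ℝ)+1))^p * (((b:ℝ)+1))^q) := by
    refine le_trans (key7 hA hB) ?_
    have h1 : (((a:ℝ)+1)+((b:ℝ)+1))^2 ≤ (((a:ℝ)+1)+((b:ℝ)+1))^p := pow_le_pow_right₀ (by linarith) hp
    have h2 : ((b:ℝ)+1)^1 ≤ ((b:ℝ)+1)^q := pow_le_pow_right₀ hB hq
    calc (((a:ℝ)+1)+((b:ℝ)+1))^2 * ((b:ℝ)+1)
        = (((a:ℝ)+1)+((b:ℝ)+1))^2 * ((b:ℝ)+1)^1 := by ring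
      _ ≤ (((a:ℝ)+1)+((b:ℝ)+1))^p * ((b:ℝ)+1)^q := by
          apply mul_le_mul h1 h2 (by positivity) (by positivity)
  have hzf : z2f p q (a, b)
      = 1 / ((((a:ℝ)+1)+((b:ℝ)+1))^p * (((b:ℝ)+1))^q) := by
    unfold z2f
    congr 2 <;> ring
  rw [hzf, dompr_prod2]
  exact one_div_le_one_div_of_le (by positivity) hkey

end Summability

section Conversion

lemma zeta3_eq_tsum (p q r : ℕ) (h : Summable (z3f p q r)) :
    zeta3 p q r = ∑' x : ℕ × ℕ × ℕ, z3f p q r x := by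
  rw [zeta3, Summable.tsum_prod h]
  refine tsum_congr fun a => ?_
  rw [Summable.tsum_prod (h.prod_factor a)]
  rfl

lemma zeta2_eq_tsum (p q : ℕ) (h : Summable (z2f p q)) :
    zeta2 p q = ∑' x : ℕ × ℕ, z2f p q x := by
  rw [zeta2, Summable.tsum_prod h]
  rfl

end Conversion

section Pointwise

lemma idI (k : ℕ) {s r : ℝ} (hs : 0 < s) (hr : 0 < r) :
    ∑ i ∈ Finset.range k, (1+(i:ℝ))/((s+r)^(2+i) * r^(k-i))
      = 1/(s^2*r^k) - (k:ℝ)/(s*(s+r)^(k+1)) - 1/(s^2*(s+r)^k) := by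
  induction k with
  | zero => simp
  | succ k ih =>
    have hsr : (0:ℝ) < s + r := by linarith
    have hs' : s ≠ 0 := ne_of_gt hs
    have hr' : r ≠ 0 := ne_of_gt hr
    have hsr' : s + r ≠ 0 := ne_of_gt hsr
    rw [Finset.sum_range_succ]
    have hterm : ∀ i ∈ Finset.range k,
        (1+(i:ℝ))/((s+r)^(2+i) * r^(k+1-i))
          = ((1+(i:ℝ))/((s+r)^(2+i) * r^(k-i)))/r := by
      intro i hi
      have hik : i < k := Finset.mem_range.mp hi
      have : k + 1 - i = (k - i) + 1 := by omega
      rw [this, pow_succ, div_div]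
      ring_nf
    rw [Finset.sum_congr rfl hterm, ← Finset.sum_div, ih]
    have hk1 : k + 1 - k = 1 := by omega
    rw [hk1]
    have e1 : (s+r)^(k+1) = (s+r)^k*(s+r) := pow_succ _ _
    have e2 : (s+r)^(k+1+1) = (s+r)^k*(s+r)^2 := by rw [pow_add]; ring
    have e3 : (s+r)^(2+k) = (s+r)^k*(s+r)^2 := by rw [pow_add]; ring
    have e4 : r^(k+1) = r^k*r := pow_succ _ _
    have hx : (s+r)^k ≠ 0 := pow_ne_zero _ hsr'
    have hy : r^k ≠ 0 := pow_ne_zero _ hr'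
    rw [e1, e2, e3, e4]
    push_cast
    field_simp
    ring

lemma idII (k : ℕ) {s r : ℝ} (hs : 0 < s) (hr : 0 < r) :
    ∑ i ∈ Finset.range k, 1/((s+r)^(1+i) * r^(k-i))
      = 1/(s*r^k) - 1/(s*(s+r)^k) := by
  induction k with
  | zero => simp
  | succ k ih =>
    have hsr : (0:ℝ) < s + r := by linarith
    have hs' : s ≠ 0 := ne_of_gt hs
    have hr' : r ≠ 0 := ne_of_gt hr
    have hsr' : s + r ≠ 0 := ne_of_gt hsr
    rw [Finset.sum_range_succ]
    have hterm : ∀ i ∈ Finset.range k,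
        (1:ℝ)/((s+r)^(1+i) * r^(k+1-i))
          = ((1:ℝ)/((s+r)^(1+i) * r^(k-i)))/r := by
      intro i hi
      have hik : i < k := Finset.mem_range.mp hi
      have : k + 1 - i = (k - i) + 1 := by omega
      rw [this, pow_succ, div_div]
      ring_nf
    rw [Finset.sum_congr rfl hterm, ← Finset.sum_div, ih]
    have hk1 : k + 1 - k = 1 := by omega
    rw [hk1]
    have e1 : (s+r)^(k+1) = (s+r)^k*(s+r) := pow_succ _ _
    have e3 : (s+r)^(1+k) = (s+r)^k*(s+r) := by rw [pow_add]; ring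
    have e4 : r^(k+1) = r^k*r := pow_succ _ _
    have hx : (s+r)^k ≠ 0 := pow_ne_zero _ hsr'
    have hy : r^k ≠ 0 := pow_ne_zero _ hr'
    rw [e1, e3, e4]
    field_simp
    ring

lemma euler4 (k : ℕ) {P m r : ℝ} (hP : 0 < P) (hm : 0 < m) (hr : 0 < r) :
    1/(P^2*m^2*r^k)
      = 2/(P*(P+m)^3*r^k) + 1/(P^2*(P+m)^2*r^k) + 2/(m*(P+m)^3*r^k) + 1/(m^2*(P+m)^2*r^k) := by
  have hPm : (0:ℝ) < P + m := by linarith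
  have h1 : P ≠ 0 := ne_of_gt hP
  have h2 : m ≠ 0 := ne_of_gt hm
  have h3 : P + m ≠ 0 := ne_of_gt hPm
  have h4 : r^k ≠ 0 := pow_ne_zero _ (ne_of_gt hr)
  field_simp
  ring

end Pointwise

section LHSChain

def swapE : ℕ×ℕ×ℕ ≃ ℕ×ℕ×ℕ :=
  ⟨fun x => (x.1, x.2.2, x.2.1), fun x => (x.1, x.2.2, x.2.1),
   fun ⟨_,_,_⟩ => rfl, fun ⟨_,_,_⟩ => rfl⟩

def tauE : ℕ×ℕ×ℕ ≃ ℕ×ℕ×ℕ :=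
  ⟨fun x => (x.2.1, x.1, x.2.2), fun x => (x.2.1, x.1, x.2.2),
   fun ⟨_,_,_⟩ => rfl, fun ⟨_,_,_⟩ => rfl⟩

lemma ptI (k : ℕ) (x : ℕ×ℕ×ℕ) :
    ∑ i ∈ Finset.range k, (1+(i:ℝ)) * z3f 2 (2+i) (k-i) x
      = uf k (tauE x) - (k:ℝ) * z3f 2 (k+1) 1 (swapE x) - z3f 2 k 2 (swapE x) := by
  obtain ⟨a, b, c⟩ := x
  have hs : (0:ℝ) < (b:ℝ)+1 := by positivity
  have hr : (0:ℝ) < (c:ℝ)+1 := by positivity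
  have hM : (0:ℝ) < ((a:ℝ)+(b:ℝ)+(c:ℝ)+3)^2 := by positivity
  have hterm : ∀ i ∈ Finset.range k,
      (1+(i:ℝ)) * z3f 2 (2+i) (k-i) (a,b,c)
        = (1/((a:ℝ)+(b:ℝ)+(c:ℝ)+3)^2) *
          ((1+(i:ℝ))/(((((b:ℝ)+1))+((c:ℝ)+1))^(2+i) * (((c:ℝ)+1))^(k-i))) := by
    intro i _
    unfold z3f
    rw [mul_one_div, div_mul_div_comm, one_mul]
    congr 1
    ring
  rw [Finset.sum_congr rfl hterm, ← Finset.mul_sum, idI k hs hr]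
  show _ = uf k (b, a, c) - (k:ℝ) * z3f 2 (k+1) 1 (a, c, b) - z3f 2 k 2 (a, c, b)
  unfold uf z3f
  rw [mul_sub, mul_sub]
  congr 1
  congr 1
  · rw [one_div_mul_one_div]
    congr 1
    ring
  · rw [div_mul_div_comm, mul_one_div, one_mul]
    congr 1
    ring
  · rw [one_div_mul_one_div]
    congr 1
    ring

lemma ptII (k : ℕ) (x : ℕ×ℕ×ℕ) :
    ∑ i ∈ Finset.range k, z3f 3 (1+i) (k-i) x
      = vf k (tauE x) - z3f 3 k 1 (swapE x) := by
  obtain ⟨a, b, c⟩ := x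
  have hs : (0:ℝ) < (b:ℝ)+1 := by positivity
  have hr : (0:ℝ) < (c:ℝ)+1 := by positivity
  have hterm : ∀ i ∈ Finset.range k,
      z3f 3 (1+i) (k-i) (a,b,c)
        = (1/((a:ℝ)+(b:ℝ)+(c:ℝ)+3)^3) *
          (1/(((((b:ℝ)+1))+((c:ℝ)+1))^(1+i) * (((c:ℝ)+1))^(k-i))) := by
    intro i _
    unfold z3f
    rw [one_div_mul_one_div]
    congr 1
    ring
  rw [Finset.sum_congr rfl hterm, ← Finset.mul_sum, idII k hs hr]
  show _ = vf k (b, a, c) - z3f 3 k 1 (a, c, b)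
  unfold vf z3f
  rw [mul_sub]
  congr 1
  · rw [one_div_mul_one_div]
    congr 1
    ring
  · rw [one_div_mul_one_div]
    congr 1
    ring

lemma summable_uf_tau (k : ℕ) (hk : 1 ≤ k) : Summable (fun x => uf k (tauE x)) :=
  tauE.summable_iff.mpr (summable_uf k hk)

lemma summable_vf_tau (k : ℕ) (hk : 1 ≤ k) : Summable (fun x => vf k (tauE x)) :=
  tauE.summable_iff.mpr (summable_vf k hk)

lemma sum1_eq (k : ℕ) (hk : 1 ≤ k) :
    ∑ i ∈ Finset.range k, (1+(i:ℝ)) * zeta3 2 (2+i) (k-i)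
      = (∑' x : ℕ×ℕ×ℕ, uf k x) - (k:ℝ) * zeta3 2 (k+1) 1 - zeta3 2 k 2 := by
  have hsummand : ∀ i ∈ Finset.range k, Summable (fun x => (1+(i:ℝ)) * z3f 2 (2+i) (k-i) x) := by
    intro i hi
    have hik : i < k := Finset.mem_range.mp hi
    exact (summable_z3f 2 (2+i) (k-i) (by omega) (by omega) (by omega) (by omega)).mul_left _
  have h1 : ∀ i ∈ Finset.range k,
      (1+(i:ℝ)) * zeta3 2 (2+i) (k-i) = ∑' x : ℕ×ℕ×ℕ, (1+(i:ℝ)) * z3f 2 (2+i) (k-i) x := by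
    intro i hi
    have hik : i < k := Finset.mem_range.mp hi
    rw [zeta3_eq_tsum 2 (2+i) (k-i)
      (summable_z3f 2 (2+i) (k-i) (by omega) (by omega) (by omega) (by omega)), tsum_mul_left]
  rw [Finset.sum_congr rfl h1, ← Summable.tsum_finsetSum hsummand]
  have h2 : ∀ x : ℕ×ℕ×ℕ, ∑ i ∈ Finset.range k, (1+(i:ℝ)) * z3f 2 (2+i) (k-i) x
      = uf k (tauE x) - ((k:ℝ) * z3f 2 (k+1) 1 (swapE x) + z3f 2 k 2 (swapE x)) := by
    intro x
    rw [ptI k x]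
    ring
  rw [tsum_congr h2]
  have hsu := summable_uf_tau k hk
  have hs1 : Summable (fun x => (k:ℝ) * z3f 2 (k+1) 1 (swapE x)) :=
    (swapE.summable_iff.mpr (summable_z3f 2 (k+1) 1 (by omega) (by omega) (by omega) (by omega))).mul_left _
  have hs2 : Summable (fun x => z3f 2 k 2 (swapE x)) :=
    swapE.summable_iff.mpr (summable_z3f 2 k 2 (by omega) (by omega) (by omega) (by omega))
  rw [Summable.tsum_sub hsu (hs1.add hs2), Summable.tsum_add hs1 hs2, tsum_mul_left]
  rw [show ∑' x, uf k (tauE x) = ∑' x, uf k x from tauE.tsum_eq (uf k)]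
  rw [show ∑' x, z3f 2 (k+1) 1 (swapE x) = ∑' x, z3f 2 (k+1) 1 x from swapE.tsum_eq _]
  rw [show ∑' x, z3f 2 k 2 (swapE x) = ∑' x, z3f 2 k 2 x from swapE.tsum_eq _]
  rw [← zeta3_eq_tsum 2 (k+1) 1 (summable_z3f 2 (k+1) 1 (by omega) (by omega) (by omega) (by omega)),
     ← zeta3_eq_tsum 2 k 2 (summable_z3f 2 k 2 (by omega) (by omega) (by omega) (by omega))]
  ring

lemma sum2_eq (k : ℕ) (hk : 1 ≤ k) :
    ∑ i ∈ Finset.range k, zeta3 3 (1+i) (k-i)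
      = (∑' x : ℕ×ℕ×ℕ, vf k x) - zeta3 3 k 1 := by
  have hsummand : ∀ i ∈ Finset.range k, Summable (z3f 3 (1+i) (k-i)) := by
    intro i hi
    have hik : i < k := Finset.mem_range.mp hi
    exact summable_z3f 3 (1+i) (k-i) (by omega) (by omega) (by omega) (by omega)
  have h1 : ∀ i ∈ Finset.range k,
      zeta3 3 (1+i) (k-i) = ∑' x : ℕ×ℕ×ℕ, z3f 3 (1+i) (k-i) x := by
    intro i hi
    exact zeta3_eq_tsum 3 (1+i) (k-i) (hsummand i hi)
  rw [Finset.sum_congr rfl h1, ← Summable.tsum_finsetSum hsummand, tsum_congr (ptII k)]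
  have hsv := summable_vf_tau k hk
  have hs2 : Summable (fun x => z3f 3 k 1 (swapE x)) :=
    swapE.summable_iff.mpr (summable_z3f 3 k 1 (by omega) (by omega) (by omega) (by omega))
  rw [Summable.tsum_sub hsv hs2]
  rw [show ∑' x, vf k (tauE x) = ∑' x, vf k x from tauE.tsum_eq (vf k)]
  rw [show ∑' x, z3f 3 k 1 (swapE x) = ∑' x, z3f 3 k 1 x from swapE.tsum_eq _]
  rw [← zeta3_eq_tsum 3 k 1 (summable_z3f 3 k 1 (by omega) (by omega) (by omega) (by omega))]

end LHSChain

section Shuffle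

lemma ptEuler (k : ℕ) (x : ℕ×ℕ×ℕ) :
    tf k x = 2*vf k x + uf k x + 2*z3f 3 1 k x + z3f 2 2 k x := by
  obtain ⟨a, b, c⟩ := x
  have hP : (0:ℝ) < (a:ℝ)+1 := by positivity
  have hm : (0:ℝ) < (b:ℝ)+(c:ℝ)+2 := by positivity
  have hr : (0:ℝ) < (c:ℝ)+1 := by positivity
  have h := euler4 k hP hm hr
  rw [show tf k (a,b,c) = 1/(((a:ℝ)+1)^2*((b:ℝ)+(c:ℝ)+2)^2*((c:ℝ)+1)^k) from rfl, h]
  have e1 : 2/(((a:ℝ)+1)*(((a:ℝ)+1)+((b:ℝ)+(c:ℝ)+2))^3*((c:ℝ)+1)^k) = 2*vf k (a,b,c) := by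
    unfold vf
    rw [mul_one_div]
    congr 1
    ring
  have e2 : 1/(((a:ℝ)+1)^2*(((a:ℝ)+1)+((b:ℝ)+(c:ℝ)+2))^2*((c:ℝ)+1)^k) = uf k (a,b,c) := by
    unfold uf
    congr 1
    ring
  have e3 : 2/(((b:ℝ)+(c:ℝ)+2)*(((a:ℝ)+1)+((b:ℝ)+(c:ℝ)+2))^3*((c:ℝ)+1)^k)
      = 2*z3f 3 1 k (a,b,c) := by
    unfold z3f
    rw [mul_one_div]
    congr 1
    ring
  have e4 : 1/(((b:ℝ)+(c:ℝ)+2)^2*(((a:ℝ)+1)+((b:ℝ)+(c:ℝ)+2))^2*((c:ℝ)+1)^k)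
      = z3f 2 2 k (a,b,c) := by
    unfold z3f
    congr 1
    ring
  rw [e1, e2, e3, e4]

lemma shuffle (k : ℕ) (hk : 1 ≤ k) :
    ∑' x : ℕ×ℕ×ℕ, tf k x
      = 2*(∑' x : ℕ×ℕ×ℕ, vf k x) + (∑' x : ℕ×ℕ×ℕ, uf k x) + 2*zeta3 3 1 k + zeta3 2 2 k := by
  have hv := summable_vf k hk
  have hu := summable_uf k hk
  have h31 := summable_z3f 3 1 k (by omega) (by omega) hk (by omega)
  have h22 := summable_z3f 2 2 k (by omega) (by omega) hk (by omega)
  rw [tsum_congr (ptEuler k)]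
  rw [Summable.tsum_add ((hv.mul_left 2).add hu |>.add (h31.mul_left 2)) h22,
      Summable.tsum_add ((hv.mul_left 2).add hu) (h31.mul_left 2),
      Summable.tsum_add (hv.mul_left 2) hu, tsum_mul_left, tsum_mul_left]
  rw [← zeta3_eq_tsum 3 1 k h31, ← zeta3_eq_tsum 2 2 k h22]

end Shuffle

section Stuffle

noncomputable def t1 (k : ℕ) (x : ℕ×ℕ×ℕ) : ℝ := if x.2.1 + x.2.2 + 2 ≤ x.1 then tf k x else 0
noncomputable def t2 (k : ℕ) (x : ℕ×ℕ×ℕ) : ℝ := if x.1 = x.2.1 + x.2.2 + 1 then tf k x else 0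
noncomputable def t3 (k : ℕ) (x : ℕ×ℕ×ℕ) : ℝ :=
  if x.2.2 < x.1 ∧ x.1 ≤ x.2.1 + x.2.2 then tf k x else 0
noncomputable def t4 (k : ℕ) (x : ℕ×ℕ×ℕ) : ℝ := if x.1 = x.2.2 then tf k x else 0
noncomputable def t5 (k : ℕ) (x : ℕ×ℕ×ℕ) : ℝ := if x.1 < x.2.2 then tf k x else 0

lemma tf_split (k : ℕ) (x : ℕ×ℕ×ℕ) :
    tf k x = t1 k x + t2 k x + t3 k x + t4 k x + t5 k x := by
  obtain ⟨a, b, c⟩ := x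
  unfold t1 t2 t3 t4 t5
  dsimp only
  split_ifs <;> first | ring1 | (exfalso; omega)

lemma t_nonneg (k : ℕ) (f : ℕ×ℕ×ℕ → ℝ)
    (h : ∀ x, f x = tf k x ∨ f x = 0) : ∀ x, 0 ≤ f x := by
  intro x
  rcases h x with h' | h' <;> rw [h']
  exact (tf_pos k x).le

lemma t_le (k : ℕ) (f : ℕ×ℕ×ℕ → ℝ)
    (h : ∀ x, f x = tf k x ∨ f x = 0) : ∀ x, f x ≤ tf k x := by
  intro x
  rcases h x with h' | h' <;> rw [h']
  · exact (tf_pos k x).le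

lemma t1_cases (k : ℕ) : ∀ x, t1 k x = tf k x ∨ t1 k x = 0 := by
  intro x; unfold t1; split_ifs <;> simp
lemma t2_cases (k : ℕ) : ∀ x, t2 k x = tf k x ∨ t2 k x = 0 := by
  intro x; unfold t2; split_ifs <;> simp
lemma t3_cases (k : ℕ) : ∀ x, t3 k x = tf k x ∨ t3 k x = 0 := by
  intro x; unfold t3; split_ifs <;> simp
lemma t4_cases (k : ℕ) : ∀ x, t4 k x = tf k x ∨ t4 k x = 0 := by
  intro x; unfold t4; split_ifs <;> simp
lemma t5_cases (k : ℕ) : ∀ x, t5 k x = tf k x ∨ t5 k x = 0 := by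
  intro x; unfold t5; split_ifs <;> simp

lemma summable_t1 (k : ℕ) (hk : 1 ≤ k) : Summable (t1 k) :=
  (summable_tf k hk).of_nonneg_of_le (t_nonneg k _ (t1_cases k)) (t_le k _ (t1_cases k))
lemma summable_t2 (k : ℕ) (hk : 1 ≤ k) : Summable (t2 k) :=
  (summable_tf k hk).of_nonneg_of_le (t_nonneg k _ (t2_cases k)) (t_le k _ (t2_cases k))
lemma summable_t3 (k : ℕ) (hk : 1 ≤ k) : Summable (t3 k) :=
  (summable_tf k hk).of_nonneg_of_le (t_nonneg k _ (t3_cases k)) (t_le k _ (t3_cases k))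
lemma summable_t4 (k : ℕ) (hk : 1 ≤ k) : Summable (t4 k) :=
  (summable_tf k hk).of_nonneg_of_le (t_nonneg k _ (t4_cases k)) (t_le k _ (t4_cases k))
lemma summable_t5 (k : ℕ) (hk : 1 ≤ k) : Summable (t5 k) :=
  (summable_tf k hk).of_nonneg_of_le (t_nonneg k _ (t5_cases k)) (t_le k _ (t5_cases k))

lemma region1 (k : ℕ) : ∑' x : ℕ×ℕ×ℕ, t1 k x = ∑' y : ℕ×ℕ×ℕ, z3f 2 2 k y := by
  have hinj : Function.Injective (fun y : ℕ×ℕ×ℕ => ((y.2.1+y.2.2+y.1+2, y.2.1, y.2.2) : ℕ×ℕ×ℕ)) := by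
    rintro ⟨d,b,c⟩ ⟨d',b',c'⟩ h
    simp only [Prod.mk.injEq] at h
    obtain ⟨h1, h2, h3⟩ := h
    simp_all <;> omega
  have hsupp : Function.support (t1 k) ⊆
      Set.range (fun y : ℕ×ℕ×ℕ => ((y.2.1+y.2.2+y.1+2, y.2.1, y.2.2) : ℕ×ℕ×ℕ)) := by
    rintro ⟨a,b,c⟩ hx
    unfold t1 at hx
    by_cases hc : b + c + 2 ≤ a
    · exact ⟨(a-(b+c+2), b, c), by simp <;> omega⟩
    · simp only [Function.mem_support] at hx
      rw [if_neg (by simpa using hc)] at hx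
      exact absurd rfl hx
  rw [← hinj.tsum_eq hsupp]
  refine tsum_congr fun ⟨d,b,c⟩ => ?_
  show t1 k (b+c+d+2, b, c) = z3f 2 2 k (d,b,c)
  unfold t1
  rw [if_pos (by simp <;> omega)]
  unfold tf z3f
  congr 1
  push_cast
  ring

lemma region2 (k : ℕ) : ∑' x : ℕ×ℕ×ℕ, t2 k x = ∑' y : ℕ×ℕ, z2f 4 k y := by
  have hinj : Function.Injective (fun y : ℕ×ℕ => ((y.1+y.2+1, y.1, y.2) : ℕ×ℕ×ℕ)) := by
    rintro ⟨b,c⟩ ⟨b',c'⟩ h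
    simp only [Prod.mk.injEq] at h
    simp_all
  have hsupp : Function.support (t2 k) ⊆
      Set.range (fun y : ℕ×ℕ => ((y.1+y.2+1, y.1, y.2) : ℕ×ℕ×ℕ)) := by
    rintro ⟨a,b,c⟩ hx
    unfold t2 at hx
    by_cases hc : a = b + c + 1
    · exact ⟨(b, c), by simp <;> omega⟩
    · simp only [Function.mem_support] at hx
      rw [if_neg (by simpa using hc)] at hx
      exact absurd rfl hx
  rw [← hinj.tsum_eq hsupp]
  refine tsum_congr fun ⟨b,c⟩ => ?_
  show t2 k (b+c+1, b, c) = z2f 4 k (b,c)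
  unfold t2
  rw [if_pos (by simp)]
  unfold tf z2f
  congr 1
  push_cast
  ring

lemma region3 (k : ℕ) : ∑' x : ℕ×ℕ×ℕ, t3 k x = ∑' y : ℕ×ℕ×ℕ, z3f 2 2 k y := by
  have hinj : Function.Injective
      (fun y : ℕ×ℕ×ℕ => ((y.2.2+y.2.1+1, y.1+y.2.1+1, y.2.2) : ℕ×ℕ×ℕ)) := by
    rintro ⟨d,e,c⟩ ⟨d',e',c'⟩ h
    simp only [Prod.mk.injEq] at h
    obtain ⟨h1, h2, h3⟩ := h
    simp_all <;> omega
  have hsupp : Function.support (t3 k) ⊆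
      Set.range (fun y : ℕ×ℕ×ℕ => ((y.2.2+y.2.1+1, y.1+y.2.1+1, y.2.2) : ℕ×ℕ×ℕ)) := by
    rintro ⟨a,b,c⟩ hx
    unfold t3 at hx
    by_cases hc : c < a ∧ a ≤ b + c
    · exact ⟨(b+c-a, a-c-1, c), by simp <;> omega⟩
    · simp only [Function.mem_support] at hx
      rw [if_neg (by simpa using hc)] at hx
      exact absurd rfl hx
  rw [← hinj.tsum_eq hsupp]
  refine tsum_congr fun ⟨d,e,c⟩ => ?_
  show t3 k (c+e+1, d+e+1, c) = z3f 2 2 k (d,e,c)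
  unfold t3
  rw [if_pos (by constructor <;> simp <;> omega)]
  unfold tf z3f
  congr 1
  push_cast
  ring

lemma region4 (k : ℕ) : ∑' x : ℕ×ℕ×ℕ, t4 k x = ∑' y : ℕ×ℕ, z2f 2 (k+2) y := by
  have hinj : Function.Injective (fun y : ℕ×ℕ => ((y.2, y.1, y.2) : ℕ×ℕ×ℕ)) := by
    rintro ⟨b,c⟩ ⟨b',c'⟩ h
    simp only [Prod.mk.injEq] at h
    simp_all
  have hsupp : Function.support (t4 k) ⊆
      Set.range (fun y : ℕ×ℕ => ((y.2, y.1, y.2) : ℕ×ℕ×ℕ)) := by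
    rintro ⟨a,b,c⟩ hx
    unfold t4 at hx
    by_cases hc : a = c
    · exact ⟨(b, c), by simp <;> omega⟩
    · simp only [Function.mem_support] at hx
      rw [if_neg (by simpa using hc)] at hx
      exact absurd rfl hx
  rw [← hinj.tsum_eq hsupp]
  refine tsum_congr fun ⟨b,c⟩ => ?_
  show t4 k (c, b, c) = z2f 2 (k+2) (b,c)
  unfold t4
  rw [if_pos rfl]
  unfold tf z2f
  congr 1
  push_cast
  ring

lemma region5 (k : ℕ) : ∑' x : ℕ×ℕ×ℕ, t5 k x = ∑' y : ℕ×ℕ×ℕ, z3f 2 k 2 y := by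
  have hinj : Function.Injective
      (fun y : ℕ×ℕ×ℕ => ((y.2.2, y.1, y.2.1+y.2.2+1) : ℕ×ℕ×ℕ)) := by
    rintro ⟨p,q,r⟩ ⟨p',q',r'⟩ h
    simp only [Prod.mk.injEq] at h
    obtain ⟨h1, h2, h3⟩ := h
    simp_all <;> omega
  have hsupp : Function.support (t5 k) ⊆
      Set.range (fun y : ℕ×ℕ×ℕ => ((y.2.2, y.1, y.2.1+y.2.2+1) : ℕ×ℕ×ℕ)) := by
    rintro ⟨a,b,c⟩ hx
    unfold t5 at hx
    by_cases hc : a < c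
    · exact ⟨(b, c-a-1, a), by simp <;> omega⟩
    · simp only [Function.mem_support] at hx
      rw [if_neg (by simpa using hc)] at hx
      exact absurd rfl hx
  rw [← hinj.tsum_eq hsupp]
  refine tsum_congr fun ⟨p,q,r⟩ => ?_
  show t5 k (r, p, q+r+1) = z3f 2 k 2 (p,q,r)
  unfold t5
  rw [if_pos (by simp <;> omega)]
  unfold tf z3f
  congr 1
  push_cast
  ring

lemma stuffle (k : ℕ) (hk : 1 ≤ k) :
    ∑' x : ℕ×ℕ×ℕ, tf k x
      = 2*zeta3 2 2 k + zeta3 2 k 2 + zeta2 4 k + zeta2 2 (k+2) := by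
  have s1 := summable_t1 k hk
  have s2 := summable_t2 k hk
  have s3 := summable_t3 k hk
  have s4 := summable_t4 k hk
  have s5 := summable_t5 k hk
  rw [tsum_congr (tf_split k)]
  rw [Summable.tsum_add (((s1.add s2).add s3).add s4) s5,
      Summable.tsum_add ((s1.add s2).add s3) s4,
      Summable.tsum_add (s1.add s2) s3,
      Summable.tsum_add s1 s2]
  rw [region1, region2, region3, region4, region5]
  rw [← zeta3_eq_tsum 2 2 k (summable_z3f 2 2 k (by omega) (by omega) hk (by omega)),
      ← zeta3_eq_tsum 2 k 2 (summable_z3f 2 k 2 (by omega) hk (by omega) (by omega)),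
      ← zeta2_eq_tsum 4 k (summable_z2f 4 k (by omega) hk),
      ← zeta2_eq_tsum 2 (k+2) (summable_z2f 2 (k+2) (by omega) (by omega))]
  ring

end Stuffle

theorem double_shuffle_relation_family (k : ℕ) (hk : 1 ≤ k) :
    (∑ i ∈ Finset.range k, (1 + (i : ℝ)) * zeta3 2 (2 + i) (k - i)) +
      2 * (∑ i ∈ Finset.range k, zeta3 3 (1 + i) (k - i)) +
      zeta3 2 k 2 + (k : ℝ) * zeta3 2 (k + 1) 1 + 2 * zeta3 3 k 1 =
    zeta3 2 2 k - 2 * zeta3 3 1 k + zeta3 2 k 2 + zeta2 4 k + zeta2 2 (2 + k) := by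
  have h1 := sum1_eq k hk
  have h2 := sum2_eq k hk
  have hsh := shuffle k hk
  have hst := stuffle k hk
  have h2k : zeta2 2 (2+k) = zeta2 2 (k+2) := by rw [Nat.add_comm]
  rw [h1, h2, h2k]
  linarith [hsh, hst]
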